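/- arXiv:2511.21864 — 5 statements merged into one kernel-verified Lean document; each statement's English description precedes it below -/
import Mathlib

section
/- Fix R₂ > 0 and 0 < ρ < R₂. Define g₁(r) = 2r/R₂² and g₂(r) = (2r/(π R₂²))·arccos((ρ² + r² − R₂²)/(2ρr)). Then ∫₀^{R₂−ρ} g₁(r) dr + ∫_{R₂−ρ}^{R₂+ρ} g₂(r) dr = 1. -/
open Real intervalIntegral Set

theorem key_integral (R₂ ρ : ℝ) (hR : 0 < R₂) (hρ0 : 0 < ρ) (hρ : ρ < R₂) :
    (∫ r in (R₂ - ρ)..(R₂ + ρ), r * Real.arccos ((ρ ^ 2 + r ^ 2 - R₂ ^ 2) / (2 * ρ * r)))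
      = π / 2 * (R₂ ^ 2 - (R₂ - ρ) ^ 2) := by
  set a := R₂ - ρ with ha
  set b := R₂ + ρ with hb
  have ha0 : 0 < a := by simp [ha]; linarith
  have hab : a < b := by simp [ha, hb]; linarith
  set F : ℝ → ℝ := fun x => x ^ 2 / 2 * Real.arccos ((ρ ^ 2 + x ^ 2 - R₂ ^ 2) / (2 * ρ * x))
      - Real.sqrt (4 * ρ ^ 2 * R₂ ^ 2 - (x ^ 2 - ρ ^ 2 - R₂ ^ 2) ^ 2) / 4
      + R₂ ^ 2 / 2 * Real.arcsin ((x ^ 2 - ρ ^ 2 - R₂ ^ 2) / (2 * ρ * R₂)) with hF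
  have hcont : ContinuousOn F (Icc a b) := by
    apply ContinuousOn.add
    apply ContinuousOn.sub
    · apply ContinuousOn.mul (by fun_prop)
      apply Real.continuous_arccos.comp_continuousOn
      apply ContinuousOn.div (by fun_prop) (by fun_prop)
      intro x hx
      have : 0 < x := lt_of_lt_of_le ha0 hx.1
      positivity
    · fun_prop
    · exact (continuous_const.mul (Real.continuous_arcsin.comp (by fun_prop))).continuousOn
  have hderiv : ∀ x ∈ Ioo a b, HasDerivAt F
      (x * Real.arccos ((ρ ^ 2 + x ^ 2 - R₂ ^ 2) / (2 * ρ * x))) x := by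
    intro r hr
    have hr0 : 0 < r := lt_trans ha0 hr.1
    have hra : a < r := hr.1
    have hrb : r < b := hr.2
    have hrne : (2 * ρ * r) ≠ 0 := by positivity
    set u : ℝ := (ρ ^ 2 + r ^ 2 - R₂ ^ 2) / (2 * ρ * r) with hu
    have hu1 : u < 1 := by
      rw [hu, div_lt_one (by positivity)]
      nlinarith [hr.1, hr.2]
    have hu2 : -1 < u := by
      rw [hu, neg_lt, ← neg_div, div_lt_one (by positivity)]
      nlinarith [hr.1, hr.2]
    set v : ℝ := (r ^ 2 - ρ ^ 2 - R₂ ^ 2) / (2 * ρ * R₂) with hv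
    have hv1 : v < 1 := by
      rw [hv, div_lt_one (by positivity)]
      nlinarith [hr.2]
    have hv2 : -1 < v := by
      rw [hv, neg_lt, ← neg_div, div_lt_one (by positivity)]
      nlinarith [hr.1]
    have hDpos : 0 < 4 * ρ ^ 2 * R₂ ^ 2 - (r ^ 2 - ρ ^ 2 - R₂ ^ 2) ^ 2 := by
      have h1 : 0 < (ρ + R₂) ^ 2 - r ^ 2 := by nlinarith [hr.2]
      have h2 : 0 < r ^ 2 - (R₂ - ρ) ^ 2 := by nlinarith [hr.1]
      nlinarith [mul_pos h1 h2]
    set D : ℝ := Real.sqrt (4 * ρ ^ 2 * R₂ ^ 2 - (r ^ 2 - ρ ^ 2 - R₂ ^ 2) ^ 2) with hD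
    have hDpos' : 0 < D := Real.sqrt_pos.2 hDpos
    have hD2 : D ^ 2 = 4 * ρ ^ 2 * R₂ ^ 2 - (r ^ 2 - ρ ^ 2 - R₂ ^ 2) ^ 2 := by
      rw [hD]; exact Real.sq_sqrt hDpos.le
    have hequ : 1 - u ^ 2 = (D / (2 * ρ * r)) ^ 2 := by
      rw [hu, hD, div_pow, div_pow, Real.sq_sqrt hDpos.le]
      field_simp
      ring
    have hsu : Real.sqrt (1 - u ^ 2) = D / (2 * ρ * r) := by
      rw [hequ]; exact Real.sqrt_sq (by positivity)
    have heqv : 1 - v ^ 2 = (D / (2 * ρ * R₂)) ^ 2 := by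
      rw [hv, hD, div_pow, div_pow, Real.sq_sqrt hDpos.le]
      field_simp
      ring
    have hsv : Real.sqrt (1 - v ^ 2) = D / (2 * ρ * R₂) := by
      rw [heqv]; exact Real.sqrt_sq (by positivity)
    -- derivatives of inner functions
    have hs : HasDerivAt (fun x : ℝ => x ^ 2 - ρ ^ 2 - R₂ ^ 2) (2 * r) r := by
      simpa using ((hasDerivAt_pow 2 r).sub_const (ρ ^ 2)).sub_const (R₂ ^ 2)
    have hnum : HasDerivAt (fun x : ℝ => ρ ^ 2 + x ^ 2 - R₂ ^ 2) (2 * r) r := by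
      simpa using (((hasDerivAt_pow 2 r).const_add (ρ ^ 2)).sub_const (R₂ ^ 2))
    have hden : HasDerivAt (fun x : ℝ => 2 * ρ * x) (2 * ρ) r := by
      simpa using (hasDerivAt_id r).const_mul (2 * ρ)
    have huD : HasDerivAt (fun x : ℝ => (ρ ^ 2 + x ^ 2 - R₂ ^ 2) / (2 * ρ * x))
        ((2 * r * (2 * ρ * r) - (ρ ^ 2 + r ^ 2 - R₂ ^ 2) * (2 * ρ)) / (2 * ρ * r) ^ 2) r :=
      hnum.div hden hrne
    have harccos : HasDerivAt (fun x : ℝ => Real.arccos ((ρ ^ 2 + x ^ 2 - R₂ ^ 2) / (2 * ρ * x)))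
        (-(1 / Real.sqrt (1 - u ^ 2)) *
          ((2 * r * (2 * ρ * r) - (ρ ^ 2 + r ^ 2 - R₂ ^ 2) * (2 * ρ)) / (2 * ρ * r) ^ 2)) r :=
      by have h := (Real.hasDerivAt_arccos hu2.ne' hu1.ne).comp r huD; exact h
    have hx2 : HasDerivAt (fun x : ℝ => x ^ 2 / 2) r r := by
      simpa using (hasDerivAt_pow 2 r).div_const 2
    have hs2 : HasDerivAt (fun x : ℝ => (x ^ 2 - ρ ^ 2 - R₂ ^ 2) ^ 2)
        (2 * (r ^ 2 - ρ ^ 2 - R₂ ^ 2) * (2 * r)) r := by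
      simpa using hs.fun_pow 2
    have hinner : HasDerivAt (fun x : ℝ => 4 * ρ ^ 2 * R₂ ^ 2 - (x ^ 2 - ρ ^ 2 - R₂ ^ 2) ^ 2)
        (-(2 * (r ^ 2 - ρ ^ 2 - R₂ ^ 2) * (2 * r))) r := by
      simpa using (hasDerivAt_const r (4 * ρ ^ 2 * R₂ ^ 2)).fun_sub hs2
    have hsqrt : HasDerivAt
        (fun x : ℝ => Real.sqrt (4 * ρ ^ 2 * R₂ ^ 2 - (x ^ 2 - ρ ^ 2 - R₂ ^ 2) ^ 2))
        (1 / (2 * D) * -(2 * (r ^ 2 - ρ ^ 2 - R₂ ^ 2) * (2 * r))) r :=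
      (Real.hasDerivAt_sqrt hDpos.ne').comp r hinner
    have hvD : HasDerivAt (fun x : ℝ => (x ^ 2 - ρ ^ 2 - R₂ ^ 2) / (2 * ρ * R₂))
        ((2 * r) / (2 * ρ * R₂)) r := hs.div_const _
    have harcsin : HasDerivAt (fun x : ℝ => Real.arcsin ((x ^ 2 - ρ ^ 2 - R₂ ^ 2) / (2 * ρ * R₂)))
        (1 / Real.sqrt (1 - v ^ 2) * ((2 * r) / (2 * ρ * R₂))) r :=
      by have h := (Real.hasDerivAt_arcsin hv2.ne' hv1.ne).comp r hvD; exact h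
    have hFd := ((hx2.fun_mul harccos).fun_sub (hsqrt.div_const 4)).fun_add (harcsin.const_mul (R₂ ^ 2 / 2))
    refine hFd.congr_deriv ?_
    rw [hsu, hsv]
    rw [show Real.arccos ((ρ ^ 2 + r ^ 2 - R₂ ^ 2) / (2 * ρ * r)) = Real.arccos u from rfl]
    field_simp
    ring
  have hint : IntervalIntegrable
      (fun r => r * Real.arccos ((ρ ^ 2 + r ^ 2 - R₂ ^ 2) / (2 * ρ * r))) MeasureTheory.volume a b := by
    apply ContinuousOn.intervalIntegrable
    rw [uIcc_of_le hab.le]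
    apply ContinuousOn.mul (by fun_prop)
    apply Real.continuous_arccos.comp_continuousOn
    apply ContinuousOn.div (by fun_prop) (by fun_prop)
    intro x hx
    have : 0 < x := lt_of_lt_of_le ha0 hx.1
    positivity
  have := integral_eq_sub_of_hasDerivAt_of_le hab.le hcont hderiv hint
  rw [this]
  have hFb : F b = π * R₂ ^ 2 / 4 := by
    rw [hF]
    simp only
    rw [show (ρ ^ 2 + b ^ 2 - R₂ ^ 2) / (2 * ρ * b) = 1 by
        rw [hb]; rw [div_eq_one_iff_eq (by positivity)]; ring]
    rw [show 4 * ρ ^ 2 * R₂ ^ 2 - (b ^ 2 - ρ ^ 2 - R₂ ^ 2) ^ 2 = 0 by rw [hb]; ring]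
    rw [show (b ^ 2 - ρ ^ 2 - R₂ ^ 2) / (2 * ρ * R₂) = 1 by
        rw [hb]; rw [div_eq_one_iff_eq (by positivity)]; ring]
    rw [Real.arccos_one, Real.arcsin_one, Real.sqrt_zero]
    ring
  have hFa : F a = a ^ 2 / 2 * π - π * R₂ ^ 2 / 4 := by
    rw [hF]
    simp only
    rw [show (ρ ^ 2 + a ^ 2 - R₂ ^ 2) / (2 * ρ * a) = -1 by
        rw [ha]; rw [div_eq_iff (by positivity)]; ring]
    rw [show 4 * ρ ^ 2 * R₂ ^ 2 - (a ^ 2 - ρ ^ 2 - R₂ ^ 2) ^ 2 = 0 by rw [ha]; ring]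
    rw [show (a ^ 2 - ρ ^ 2 - R₂ ^ 2) / (2 * ρ * R₂) = -1 by
        rw [ha]; rw [div_eq_iff (by positivity)]; ring]
    rw [Real.arccos_neg_one, Real.arcsin_neg_one, Real.sqrt_zero]
    ring
  rw [hFb, hFa]
  ring

open Real in
theorem cond_pdf_2D_uniform_normalized (R₂ ρ : ℝ) (hR : 0 < R₂) (hρ0 : 0 < ρ) (hρ : ρ < R₂) :
    (∫ r in (0:ℝ)..(R₂ - ρ), 2 * r / R₂ ^ 2) +
    (∫ r in (R₂ - ρ)..(R₂ + ρ),
      (2 * r / (π * R₂ ^ 2)) * Real.arccos ((ρ ^ 2 + r ^ 2 - R₂ ^ 2) / (2 * ρ * r))) = 1 := by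
  have h1 : (∫ r in (0:ℝ)..(R₂ - ρ), 2 * r / R₂ ^ 2) = (R₂ - ρ) ^ 2 / R₂ ^ 2 := by
    simp_rw [show ∀ r : ℝ, 2 * r / R₂ ^ 2 = (2 / R₂ ^ 2) * r from fun r => by ring]
    rw [intervalIntegral.integral_const_mul, integral_id]
    field_simp
    ring
  have h2 : (∫ r in (R₂ - ρ)..(R₂ + ρ),
      (2 * r / (π * R₂ ^ 2)) * Real.arccos ((ρ ^ 2 + r ^ 2 - R₂ ^ 2) / (2 * ρ * r)))
      = (2 / (π * R₂ ^ 2)) * (π / 2 * (R₂ ^ 2 - (R₂ - ρ) ^ 2)) := by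
    simp_rw [show ∀ r : ℝ, (2 * r / (π * R₂ ^ 2)) * Real.arccos ((ρ ^ 2 + r ^ 2 - R₂ ^ 2) / (2 * ρ * r))
        = (2 / (π * R₂ ^ 2)) * (r * Real.arccos ((ρ ^ 2 + r ^ 2 - R₂ ^ 2) / (2 * ρ * r)))
        from fun r => by ring]
    rw [intervalIntegral.integral_const_mul, key_integral R₂ ρ hR hρ0 hρ]
  rw [h1, h2]
  have hπ : π ≠ 0 := Real.pi_ne_zero
  field_simp
  ring
end

section
/- Fix R₂ > 0 and 0 < ρ < R₂. Define g₁(r) = −4r(ρ² + r² − R₂²)/R₂⁴ and g₂(r) = (4r/(π R₂⁴))·(√((r² − (R₂−ρ)²)((R₂+ρ)² − r²)) − (ρ² + r² − R₂²)·arccos((ρ² + r² − R₂²)/(2ρr))). Then ∫₀^{R₂−ρ} g₁(r) dr + ∫_{R₂−ρ}^{R₂+ρ} g₂(r) dr = 1. -/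
open Real

noncomputable def Gaux (R₂ ρ r : ℝ) : ℝ :=
  -(ρ ^ 2 + r ^ 2 - R₂ ^ 2) ^ 2 * Real.arccos ((ρ ^ 2 + r ^ 2 - R₂ ^ 2) / (2 * ρ * r))
  + (5 / 4 * r ^ 2 - ρ ^ 2 / 2 + 3 / 4 * (ρ ^ 2 - R₂ ^ 2)) *
      Real.sqrt ((r ^ 2 - (R₂ - ρ) ^ 2) * ((R₂ + ρ) ^ 2 - r ^ 2))
  + ((ρ ^ 2 - R₂ ^ 2) ^ 2 - 4 * ρ ^ 2 * (ρ ^ 2 - R₂ ^ 2) + 2 * ρ ^ 4) *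
      (1 / 2 * Real.arcsin ((r ^ 2 - (ρ ^ 2 + R₂ ^ 2)) / (2 * ρ * R₂)))
  + (ρ ^ 2 - R₂ ^ 2) ^ 3 *
      (-(1 / (2 * (ρ ^ 2 - R₂ ^ 2))) *
        Real.arcsin (((ρ ^ 2 + R₂ ^ 2) * r ^ 2 - (ρ ^ 2 - R₂ ^ 2) ^ 2) / (2 * ρ * R₂ * r ^ 2)))

set_option maxHeartbeats 1000000 in
lemma Gaux_deriv (R₂ ρ : ℝ) (hR : 0 < R₂) (hρ0 : 0 < ρ) (hρ : ρ < R₂) {x : ℝ}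
    (hx : x ∈ Set.Ioo (R₂ - ρ) (R₂ + ρ)) :
    HasDerivAt (Gaux R₂ ρ)
      (4 * x * (Real.sqrt ((x ^ 2 - (R₂ - ρ) ^ 2) * ((R₂ + ρ) ^ 2 - x ^ 2)) -
        (ρ ^ 2 + x ^ 2 - R₂ ^ 2) * Real.arccos ((ρ ^ 2 + x ^ 2 - R₂ ^ 2) / (2 * ρ * x)))) x := by
  obtain ⟨hx1, hx2⟩ := hx
  have hx0 : 0 < x := lt_of_lt_of_le (by linarith) hx1.le
  have hQ : 0 < (x ^ 2 - (R₂ - ρ) ^ 2) * ((R₂ + ρ) ^ 2 - x ^ 2) := by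
    apply mul_pos
    · nlinarith
    · nlinarith
  set s : ℝ := Real.sqrt ((x ^ 2 - (R₂ - ρ) ^ 2) * ((R₂ + ρ) ^ 2 - x ^ 2)) with hs
  have hs2 : s ^ 2 = (x ^ 2 - (R₂ - ρ) ^ 2) * ((R₂ + ρ) ^ 2 - x ^ 2) := Real.sq_sqrt hQ.le
  have hspos : 0 < s := Real.sqrt_pos.2 hQ
  -- arccos argument strictly inside (-1,1)
  have hcsq : ((ρ ^ 2 + x ^ 2 - R₂ ^ 2) / (2 * ρ * x)) ^ 2 < 1 := by
    rw [div_pow, div_lt_one (by positivity)]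
    nlinarith
  have hcabs := abs_lt.1 ((sq_lt_one_iff_abs_lt_one _).1 hcsq)
  -- first arcsin argument
  have hA1sq : ((x ^ 2 - (ρ ^ 2 + R₂ ^ 2)) / (2 * ρ * R₂)) ^ 2 < 1 := by
    rw [div_pow, div_lt_one (by positivity)]
    nlinarith
  have hA1abs := abs_lt.1 ((sq_lt_one_iff_abs_lt_one _).1 hA1sq)
  -- second arcsin argument
  have hA2sq : (((ρ ^ 2 + R₂ ^ 2) * x ^ 2 - (ρ ^ 2 - R₂ ^ 2) ^ 2) / (2 * ρ * R₂ * x ^ 2)) ^ 2 < 1 := by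
    rw [div_pow, div_lt_one (by positivity)]
    have hsq : 0 < R₂ ^ 2 - ρ ^ 2 := by nlinarith
    have hk2 : 0 < (ρ ^ 2 - R₂ ^ 2) ^ 2 := by nlinarith [mul_pos hsq hsq]
    nlinarith [mul_pos hk2 hQ]
  have hA2abs := abs_lt.1 ((sq_lt_one_iff_abs_lt_one _).1 hA2sq)
  have hcne : (ρ ^ 2 + x ^ 2 - R₂ ^ 2) / (2 * ρ * x) ≠ -1 ∧
      (ρ ^ 2 + x ^ 2 - R₂ ^ 2) / (2 * ρ * x) ≠ 1 := ⟨hcabs.1.ne', hcabs.2.ne⟩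
  -- component derivatives
  have hu : HasDerivAt (fun r : ℝ => ρ ^ 2 + r ^ 2 - R₂ ^ 2) (2 * x) x := by
    simpa using ((hasDerivAt_pow 2 x).const_add (ρ ^ 2)).sub_const (R₂ ^ 2)
  have hden : HasDerivAt (fun r : ℝ => 2 * ρ * r) (2 * ρ) x := by
    simpa using (hasDerivAt_id x).const_mul (2 * ρ)
  have hc := hu.div hden (by positivity : (2 * ρ * x) ≠ 0)
  have hθ := (Real.hasDerivAt_arccos hcne.1 hcne.2).comp x hc
  have h1 := ((hu.pow 2).neg).mul hθ
  have hQd := ((hasDerivAt_pow 2 x).sub_const ((R₂ - ρ) ^ 2)).mul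
      ((hasDerivAt_pow 2 x).const_sub ((R₂ + ρ) ^ 2))
  have hsd := (Real.hasDerivAt_sqrt (ne_of_gt hQ)).comp x hQd
  have hB : HasDerivAt (fun r : ℝ => 5 / 4 * r ^ 2 - ρ ^ 2 / 2 + 3 / 4 * (ρ ^ 2 - R₂ ^ 2))
      (5 / 4 * (2 * x)) x := by
    simpa using (((hasDerivAt_pow 2 x).const_mul (5 / 4 : ℝ)).sub_const
      (ρ ^ 2 / 2)).add_const (3 / 4 * (ρ ^ 2 - R₂ ^ 2))
  have h2 := hB.mul hsd
  have hA1 := ((hasDerivAt_pow 2 x).sub_const (ρ ^ 2 + R₂ ^ 2)).div_const (2 * ρ * R₂)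
  have harc1 := (Real.hasDerivAt_arcsin hA1abs.1.ne' hA1abs.2.ne).comp x hA1
  have h3 := (harc1.const_mul (1 / 2 : ℝ)).const_mul
      ((ρ ^ 2 - R₂ ^ 2) ^ 2 - 4 * ρ ^ 2 * (ρ ^ 2 - R₂ ^ 2) + 2 * ρ ^ 4)
  have hA2 := (((hasDerivAt_pow 2 x).const_mul (ρ ^ 2 + R₂ ^ 2)).sub_const
      ((ρ ^ 2 - R₂ ^ 2) ^ 2)).div ((hasDerivAt_pow 2 x).const_mul (2 * ρ * R₂))
      (by positivity : (2 * ρ * R₂ * x ^ 2) ≠ 0)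
  have harc2 := (Real.hasDerivAt_arcsin hA2abs.1.ne' hA2abs.2.ne).comp x hA2
  have h4 := (harc2.const_mul (-(1 / (2 * (ρ ^ 2 - R₂ ^ 2))))).const_mul ((ρ ^ 2 - R₂ ^ 2) ^ 3)
  have H := ((h1.add h2).add h3).add h4
  show HasDerivAt (fun r : ℝ =>
    -(ρ ^ 2 + r ^ 2 - R₂ ^ 2) ^ 2 * Real.arccos ((ρ ^ 2 + r ^ 2 - R₂ ^ 2) / (2 * ρ * r))
    + (5 / 4 * r ^ 2 - ρ ^ 2 / 2 + 3 / 4 * (ρ ^ 2 - R₂ ^ 2)) *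
        Real.sqrt ((r ^ 2 - (R₂ - ρ) ^ 2) * ((R₂ + ρ) ^ 2 - r ^ 2))
    + ((ρ ^ 2 - R₂ ^ 2) ^ 2 - 4 * ρ ^ 2 * (ρ ^ 2 - R₂ ^ 2) + 2 * ρ ^ 4) *
        (1 / 2 * Real.arcsin ((r ^ 2 - (ρ ^ 2 + R₂ ^ 2)) / (2 * ρ * R₂)))
    + (ρ ^ 2 - R₂ ^ 2) ^ 3 *
        (-(1 / (2 * (ρ ^ 2 - R₂ ^ 2))) *
          Real.arcsin (((ρ ^ 2 + R₂ ^ 2) * r ^ 2 - (ρ ^ 2 - R₂ ^ 2) ^ 2) / (2 * ρ * R₂ * r ^ 2)))) _ x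
  convert H using 1
  · rfl
  · rfl
  · rfl
  have hsub : (0:ℝ) < R₂ ^ 2 - ρ ^ 2 := by nlinarith
  have e1 : Real.sqrt (1 - ((ρ ^ 2 + x ^ 2 - R₂ ^ 2) / (2 * ρ * x)) ^ 2) = s / (2 * ρ * x) := by
    rw [show (1:ℝ) - ((ρ ^ 2 + x ^ 2 - R₂ ^ 2) / (2 * ρ * x)) ^ 2
        = ((x ^ 2 - (R₂ - ρ) ^ 2) * ((R₂ + ρ) ^ 2 - x ^ 2)) / (2 * ρ * x) ^ 2 by
          field_simp; ring,
      Real.sqrt_div hQ.le, Real.sqrt_sq (by positivity), hs]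
  have e2 : Real.sqrt (1 - ((x ^ 2 - (ρ ^ 2 + R₂ ^ 2)) / (2 * ρ * R₂)) ^ 2) = s / (2 * ρ * R₂) := by
    rw [show (1:ℝ) - ((x ^ 2 - (ρ ^ 2 + R₂ ^ 2)) / (2 * ρ * R₂)) ^ 2
        = ((x ^ 2 - (R₂ - ρ) ^ 2) * ((R₂ + ρ) ^ 2 - x ^ 2)) / (2 * ρ * R₂) ^ 2 by
          field_simp; ring,
      Real.sqrt_div hQ.le, Real.sqrt_sq (by positivity), hs]
  have e3 : Real.sqrt (1 - (((ρ ^ 2 + R₂ ^ 2) * x ^ 2 - (ρ ^ 2 - R₂ ^ 2) ^ 2) / (2 * ρ * R₂ * x ^ 2)) ^ 2)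
      = (R₂ ^ 2 - ρ ^ 2) * s / (2 * ρ * R₂ * x ^ 2) := by
    rw [show (1:ℝ) - (((ρ ^ 2 + R₂ ^ 2) * x ^ 2 - (ρ ^ 2 - R₂ ^ 2) ^ 2) / (2 * ρ * R₂ * x ^ 2)) ^ 2
        = ((R₂ ^ 2 - ρ ^ 2) ^ 2 * ((x ^ 2 - (R₂ - ρ) ^ 2) * ((R₂ + ρ) ^ 2 - x ^ 2))) / (2 * ρ * R₂ * x ^ 2) ^ 2 by
          field_simp; ring,
      Real.sqrt_div (by positivity), Real.sqrt_sq (by positivity),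
      Real.sqrt_mul (sq_nonneg _), Real.sqrt_sq hsub.le, hs]
  simp only [Function.comp_def]
  rw [e1, e2, e3, ← hs]
  norm_num
  have hsne : s ≠ 0 := hspos.ne'
  have hkne : ρ ^ 2 - R₂ ^ 2 ≠ 0 := by nlinarith
  have hsubne : R₂ ^ 2 - ρ ^ 2 ≠ 0 := hsub.ne'
  rw [← sub_eq_zero]
  field_simp
  rw [← hs]
  linear_combination (12 * x ^ 2 * (R₂ ^ 2 - ρ ^ 2)) * hs2

lemma Gaux_contOn (R₂ ρ : ℝ) (hR : 0 < R₂) (hρ0 : 0 < ρ) (hρ : ρ < R₂) :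
    ContinuousOn (Gaux R₂ ρ) (Set.Icc (R₂ - ρ) (R₂ + ρ)) := by
  have ha : 0 < R₂ - ρ := sub_pos.2 hρ
  have hne : ∀ x ∈ Set.Icc (R₂ - ρ) (R₂ + ρ), x ≠ 0 := fun x hx =>
    (lt_of_lt_of_le ha hx.1).ne'
  unfold Gaux
  apply ContinuousOn.add
  apply ContinuousOn.add
  apply ContinuousOn.add
  · apply ContinuousOn.mul
    · fun_prop
    · exact Real.continuous_arccos.comp_continuousOn <| ContinuousOn.div (by fun_prop)
        (by fun_prop) (fun x hx => by
          have := hne x hx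
          have hx0 : 0 < x := lt_of_lt_of_le ha hx.1
          positivity)
  · exact Continuous.continuousOn (by continuity)
  · exact (continuous_const.mul (continuous_const.mul (Real.continuous_arcsin.comp
      (((continuous_pow 2).sub continuous_const).div_const _)))).continuousOn
  · apply ContinuousOn.mul continuousOn_const
    apply ContinuousOn.mul continuousOn_const
    exact Real.continuous_arcsin.comp_continuousOn <| ContinuousOn.div (by fun_prop)
      (by fun_prop) (fun x hx => by
        have hx0 : 0 < x := lt_of_lt_of_le ha hx.1
        positivity)

lemma Gaux_at_b (R₂ ρ : ℝ) (hR : 0 < R₂) (hρ0 : 0 < ρ) (hρ : ρ < R₂) :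
    Gaux R₂ ρ (R₂ + ρ) = ((ρ ^ 2 - R₂ ^ 2) ^ 2 - 4 * ρ ^ 2 * (ρ ^ 2 - R₂ ^ 2) + 2 * ρ ^ 4) * (π / 4)
      - (ρ ^ 2 - R₂ ^ 2) ^ 2 * (π / 4) := by
  have hb : (0:ℝ) < R₂ + ρ := by linarith
  have hkne : ρ ^ 2 - R₂ ^ 2 ≠ 0 := by nlinarith
  unfold Gaux
  rw [show (ρ ^ 2 + (R₂ + ρ) ^ 2 - R₂ ^ 2) / (2 * ρ * (R₂ + ρ)) = 1 by field_simp; ring]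
  rw [show ((R₂ + ρ) ^ 2 - (R₂ - ρ) ^ 2) * ((R₂ + ρ) ^ 2 - (R₂ + ρ) ^ 2) = 0 by ring]
  rw [show ((R₂ + ρ) ^ 2 - (ρ ^ 2 + R₂ ^ 2)) / (2 * ρ * R₂) = 1 by field_simp; ring]
  rw [show ((ρ ^ 2 + R₂ ^ 2) * (R₂ + ρ) ^ 2 - (ρ ^ 2 - R₂ ^ 2) ^ 2) / (2 * ρ * R₂ * (R₂ + ρ) ^ 2) = 1 by
    rw [div_eq_one_iff_eq (by positivity)]; ring]
  rw [Real.arccos_one, Real.arcsin_one, Real.sqrt_zero]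
  field_simp
  ring

lemma Gaux_at_a (R₂ ρ : ℝ) (hR : 0 < R₂) (hρ0 : 0 < ρ) (hρ : ρ < R₂) :
    Gaux R₂ ρ (R₂ - ρ) = -(2 * ρ * (R₂ - ρ)) ^ 2 * π
      - ((ρ ^ 2 - R₂ ^ 2) ^ 2 - 4 * ρ ^ 2 * (ρ ^ 2 - R₂ ^ 2) + 2 * ρ ^ 4) * (π / 4)
      + (ρ ^ 2 - R₂ ^ 2) ^ 2 * (π / 4) := by
  have ha : (0:ℝ) < R₂ - ρ := sub_pos.2 hρ
  have hkne : ρ ^ 2 - R₂ ^ 2 ≠ 0 := by nlinarith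
  unfold Gaux
  rw [show (ρ ^ 2 + (R₂ - ρ) ^ 2 - R₂ ^ 2) / (2 * ρ * (R₂ - ρ)) = -1 by
    rw [div_eq_iff (by positivity)]; ring]
  rw [show ((R₂ - ρ) ^ 2 - (R₂ - ρ) ^ 2) * ((R₂ + ρ) ^ 2 - (R₂ - ρ) ^ 2) = 0 by ring]
  rw [show ((R₂ - ρ) ^ 2 - (ρ ^ 2 + R₂ ^ 2)) / (2 * ρ * R₂) = -1 by
    rw [div_eq_iff (by positivity)]; ring]
  rw [show ((ρ ^ 2 + R₂ ^ 2) * (R₂ - ρ) ^ 2 - (ρ ^ 2 - R₂ ^ 2) ^ 2) / (2 * ρ * R₂ * (R₂ - ρ) ^ 2) = -1 by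
    rw [div_eq_iff (by positivity)]; ring]
  rw [Real.arccos_neg_one, Real.arcsin_neg_one, Real.sqrt_zero]
  have h1 : (ρ ^ 2 + (R₂ - ρ) ^ 2 - R₂ ^ 2) = -(2 * ρ * (R₂ - ρ)) := by ring
  field_simp
  ring

open Real in
theorem cond_pdf_2D_rwp_normalized (R₂ ρ : ℝ) (hR : 0 < R₂) (hρ0 : 0 < ρ) (hρ : ρ < R₂) :
    (∫ r in (0:ℝ)..(R₂ - ρ), -4 * r * (ρ ^ 2 + r ^ 2 - R₂ ^ 2) / R₂ ^ 4) +
    (∫ r in (R₂ - ρ)..(R₂ + ρ),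
      (4 * r / (π * R₂ ^ 4)) *
        (Real.sqrt ((r ^ 2 - (R₂ - ρ) ^ 2) * ((R₂ + ρ) ^ 2 - r ^ 2)) -
          (ρ ^ 2 + r ^ 2 - R₂ ^ 2) *
            Real.arccos ((ρ ^ 2 + r ^ 2 - R₂ ^ 2) / (2 * ρ * r)))) = 1 := by
  have ha : 0 < R₂ - ρ := sub_pos.2 hρ
  have hle : R₂ - ρ ≤ R₂ + ρ := by linarith
  have hR4 : (R₂:ℝ) ^ 4 ≠ 0 := by positivity
  -- first integral
  have hI1 : (∫ r in (0:ℝ)..(R₂ - ρ), -4 * r * (ρ ^ 2 + r ^ 2 - R₂ ^ 2) / R₂ ^ 4)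
      = -((R₂ - ρ) ^ 4 + 2 * (ρ ^ 2 - R₂ ^ 2) * (R₂ - ρ) ^ 2) / R₂ ^ 4 := by
    have h : ∀ r ∈ Set.uIcc (0:ℝ) (R₂ - ρ),
        HasDerivAt (fun r : ℝ => -(r ^ 4 + 2 * (ρ ^ 2 - R₂ ^ 2) * r ^ 2) / R₂ ^ 4)
          (-4 * r * (ρ ^ 2 + r ^ 2 - R₂ ^ 2) / R₂ ^ 4) r := by
      intro r _
      have h1 : HasDerivAt (fun r : ℝ => -(r ^ 4 + 2 * (ρ ^ 2 - R₂ ^ 2) * r ^ 2) / R₂ ^ 4)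
          (-((4 : ℕ) * r ^ (4 - 1) + 2 * (ρ ^ 2 - R₂ ^ 2) * ((2 : ℕ) * r ^ (2 - 1))) / R₂ ^ 4) r :=
        (((hasDerivAt_pow 4 r).add ((hasDerivAt_pow 2 r).const_mul _)).neg).div_const _
      convert h1 using 1
      push_cast
      ring
    rw [intervalIntegral.integral_eq_sub_of_hasDerivAt h
      (Continuous.intervalIntegrable (by continuity) _ _)]
    norm_num
  -- second integral
  have hderiv : ∀ x ∈ Set.Ioo (R₂ - ρ) (R₂ + ρ),
      HasDerivAt (fun r => (π * R₂ ^ 4)⁻¹ * Gaux R₂ ρ r)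
        ((4 * x / (π * R₂ ^ 4)) *
          (Real.sqrt ((x ^ 2 - (R₂ - ρ) ^ 2) * ((R₂ + ρ) ^ 2 - x ^ 2)) -
            (ρ ^ 2 + x ^ 2 - R₂ ^ 2) *
              Real.arccos ((ρ ^ 2 + x ^ 2 - R₂ ^ 2) / (2 * ρ * x)))) x := by
    intro x hx
    have := (Gaux_deriv R₂ ρ hR hρ0 hρ hx).const_mul ((π * R₂ ^ 4)⁻¹)
    convert this using 1
    · rfl
    · rfl
    ring
  have hI2 : (∫ r in (R₂ - ρ)..(R₂ + ρ),
      (4 * r / (π * R₂ ^ 4)) *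
        (Real.sqrt ((r ^ 2 - (R₂ - ρ) ^ 2) * ((R₂ + ρ) ^ 2 - r ^ 2)) -
          (ρ ^ 2 + r ^ 2 - R₂ ^ 2) *
            Real.arccos ((ρ ^ 2 + r ^ 2 - R₂ ^ 2) / (2 * ρ * r))))
      = (π * R₂ ^ 4)⁻¹ * Gaux R₂ ρ (R₂ + ρ) - (π * R₂ ^ 4)⁻¹ * Gaux R₂ ρ (R₂ - ρ) := by
    apply intervalIntegral.integral_eq_sub_of_hasDerivAt_of_le hle
      (continuousOn_const.mul (Gaux_contOn R₂ ρ hR hρ0 hρ)) hderiv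
    apply ContinuousOn.intervalIntegrable
    rw [Set.uIcc_of_le hle]
    apply ContinuousOn.mul
    · exact ContinuousOn.div (by fun_prop) continuousOn_const (fun x _ => by positivity)
    · apply ContinuousOn.sub (Continuous.continuousOn (by continuity))
      apply ContinuousOn.mul (by fun_prop)
      exact Real.continuous_arccos.comp_continuousOn <| ContinuousOn.div (by fun_prop)
        (by fun_prop) (fun x hx => by
          have hx0 : 0 < x := lt_of_lt_of_le ha hx.1
          positivity)
  rw [hI1, hI2, Gaux_at_b R₂ ρ hR hρ0 hρ, Gaux_at_a R₂ ρ hR hρ0 hρ]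
  field_simp
  ring
end

section
/- Fix R₂ > 0 and 0 < ρ < R₂. With g₃(ρ,r) = ρ² + r² − R₂², g₄(ρ,r) = 13r² − 21R₂² + 13ρ², and g₅(ρ,r) = (r − ρ + R₂)²(ρ − r + R₂)², define g₁(r) = 35r²(104ρ²r² + 6·g₃(ρ,r)·g₄(ρ,r))/(432R₂⁷) and g₂(r) = 35r(25R₂² − 13(r − ρ)²)·g₅(ρ,r)/(864R₂⁷ρ). Then ∫₀^{R₂−ρ} g₁(r) dr + ∫_{R₂−ρ}^{R₂+ρ} g₂(r) dr = 1. -/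
private lemma hd8 (a1 a2 a3 a4 a5 a6 a7 a8 x : ℝ) :
    HasDerivAt (fun r : ℝ => a1*r + a2*r^2 + a3*r^3 + a4*r^4 + a5*r^5 + a6*r^6 + a7*r^7 + a8*r^8)
      (a1 + 2*a2*x + 3*a3*x^2 + 4*a4*x^3 + 5*a5*x^4 + 6*a6*x^5 + 7*a7*x^6 + 8*a8*x^7) x := by
  have h : ∀ n : ℕ, HasDerivAt (fun r : ℝ => r ^ n) ((n : ℝ) * x ^ (n - 1)) x :=
    fun n => hasDerivAt_pow n x
  have H := (((((((((hasDerivAt_id x).const_mul a1).add ((h 2).const_mul a2)).add ((h 3).const_mul a3)).add ((h 4).const_mul a4)).add ((h 5).const_mul a5)).add ((h 6).const_mul a6)).add ((h 7).const_mul a7)).add ((h 8).const_mul a8))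
  refine H.congr_deriv ?_
  norm_num
  ring

set_option maxHeartbeats 1000000 in
theorem cond_pdf_3D_rwp_normalized (R₂ ρ : ℝ) (hR : 0 < R₂) (hρ0 : 0 < ρ) (hρ : ρ < R₂) :
    (∫ r in (0:ℝ)..(R₂ - ρ),
      35 * r ^ 2 * (104 * ρ ^ 2 * r ^ 2 +
        6 * (ρ ^ 2 + r ^ 2 - R₂ ^ 2) * (13 * r ^ 2 - 21 * R₂ ^ 2 + 13 * ρ ^ 2)) /
        (432 * R₂ ^ 7)) +
    (∫ r in (R₂ - ρ)..(R₂ + ρ),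
      35 * r * (25 * R₂ ^ 2 - 13 * (r - ρ) ^ 2) *
        ((r - ρ + R₂) ^ 2 * (ρ - r + R₂) ^ 2) / (864 * R₂ ^ 7 * ρ)) = 1 := by
  have hc : (432 : ℝ) * R₂ ^ 7 ≠ 0 := by positivity
  have hd : (6912 : ℝ) * R₂ ^ 7 * ρ ≠ 0 := by positivity
  have hd' : (864 : ℝ) * R₂ ^ 7 * ρ ≠ 0 := by positivity
  set c : ℝ := 432 * R₂ ^ 7
  set d : ℝ := 6912 * R₂ ^ 7 * ρ
  have h1 : (∫ r in (0:ℝ)..(R₂ - ρ),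
      35 * r ^ 2 * (104 * ρ ^ 2 * r ^ 2 +
        6 * (ρ ^ 2 + r ^ 2 - R₂ ^ 2) * (13 * r ^ 2 - 21 * R₂ ^ 2 + 13 * ρ ^ 2)) /
        (432 * R₂ ^ 7)) =
      (0*(R₂-ρ) + 0*(R₂-ρ)^2 + ((1470*R₂^4 - 2380*ρ^2*R₂^2 + 910*ρ^4)/c)*(R₂-ρ)^3 + 0*(R₂-ρ)^4 +
        ((-1428*R₂^2 + 1820*ρ^2)/c)*(R₂-ρ)^5 + 0*(R₂-ρ)^6 + (390/c)*(R₂-ρ)^7 + 0*(R₂-ρ)^8) -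
      (0*(0:ℝ) + 0*(0:ℝ)^2 + ((1470*R₂^4 - 2380*ρ^2*R₂^2 + 910*ρ^4)/c)*(0:ℝ)^3 + 0*(0:ℝ)^4 +
        ((-1428*R₂^2 + 1820*ρ^2)/c)*(0:ℝ)^5 + 0*(0:ℝ)^6 + (390/c)*(0:ℝ)^7 + 0*(0:ℝ)^8) := by
    refine intervalIntegral.integral_eq_sub_of_hasDerivAt
      (f := fun x : ℝ => 0*x + 0*x^2 + ((1470*R₂^4 - 2380*ρ^2*R₂^2 + 910*ρ^4)/c)*x^3 + 0*x^4 +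
        ((-1428*R₂^2 + 1820*ρ^2)/c)*x^5 + 0*x^6 + (390/c)*x^7 + 0*x^8) ?_ ?_
    · intro x _
      refine (hd8 0 0 ((1470*R₂^4 - 2380*ρ^2*R₂^2 + 910*ρ^4)/c) 0
        ((-1428*R₂^2 + 1820*ρ^2)/c) 0 (390/c) 0 x).congr_deriv ?_
      field_simp
      ring
    · apply Continuous.intervalIntegrable
      fun_prop
  have h2 : (∫ r in (R₂ - ρ)..(R₂ + ρ),
      35 * r * (25 * R₂ ^ 2 - 13 * (r - ρ) ^ 2) *
        ((r - ρ + R₂) ^ 2 * (ρ - r + R₂) ^ 2) / (864 * R₂ ^ 7 * ρ)) =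
      (0*(R₂+ρ) +
        ((3500*R₂^6 - 8820*ρ^2*R₂^4 + 7140*ρ^4*R₂^2 - 1820*ρ^6)/d)*(R₂+ρ)^2 +
        ((11760*ρ*R₂^4 - 19040*ρ^3*R₂^2 + 7280*ρ^5)/d)*(R₂+ρ)^3 +
        ((-4410*R₂^4 + 21420*ρ^2*R₂^2 - 13650*ρ^4)/d)*(R₂+ρ)^4 +
        ((-11424*ρ*R₂^2 + 14560*ρ^3)/d)*(R₂+ρ)^5 +
        ((2380*R₂^2 - 9100*ρ^2)/d)*(R₂+ρ)^6 + (3120*ρ/d)*(R₂+ρ)^7 + (-455/d)*(R₂+ρ)^8) -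
      (0*(R₂-ρ) +
        ((3500*R₂^6 - 8820*ρ^2*R₂^4 + 7140*ρ^4*R₂^2 - 1820*ρ^6)/d)*(R₂-ρ)^2 +
        ((11760*ρ*R₂^4 - 19040*ρ^3*R₂^2 + 7280*ρ^5)/d)*(R₂-ρ)^3 +
        ((-4410*R₂^4 + 21420*ρ^2*R₂^2 - 13650*ρ^4)/d)*(R₂-ρ)^4 +
        ((-11424*ρ*R₂^2 + 14560*ρ^3)/d)*(R₂-ρ)^5 +
        ((2380*R₂^2 - 9100*ρ^2)/d)*(R₂-ρ)^6 + (3120*ρ/d)*(R₂-ρ)^7 + (-455/d)*(R₂-ρ)^8) := by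
    refine intervalIntegral.integral_eq_sub_of_hasDerivAt
      (f := fun x : ℝ => 0*x +
        ((3500*R₂^6 - 8820*ρ^2*R₂^4 + 7140*ρ^4*R₂^2 - 1820*ρ^6)/d)*x^2 +
        ((11760*ρ*R₂^4 - 19040*ρ^3*R₂^2 + 7280*ρ^5)/d)*x^3 +
        ((-4410*R₂^4 + 21420*ρ^2*R₂^2 - 13650*ρ^4)/d)*x^4 +
        ((-11424*ρ*R₂^2 + 14560*ρ^3)/d)*x^5 +
        ((2380*R₂^2 - 9100*ρ^2)/d)*x^6 + (3120*ρ/d)*x^7 + (-455/d)*x^8) ?_ ?_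
    · intro x _
      refine (hd8 0 ((3500*R₂^6 - 8820*ρ^2*R₂^4 + 7140*ρ^4*R₂^2 - 1820*ρ^6)/d)
        ((11760*ρ*R₂^4 - 19040*ρ^3*R₂^2 + 7280*ρ^5)/d)
        ((-4410*R₂^4 + 21420*ρ^2*R₂^2 - 13650*ρ^4)/d)
        ((-11424*ρ*R₂^2 + 14560*ρ^3)/d)
        ((2380*R₂^2 - 9100*ρ^2)/d) (3120*ρ/d) (-455/d) x).congr_deriv ?_
      field_simp
      ring
    · apply Continuous.intervalIntegrable
      fun_prop
  rw [h1, h2]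
  simp only [c, d]
  field_simp
  ring
end

section
/- Let R > 0 and define f(r) = (2r/R⁴)·( (2(R² − r²)/π)·arccos(r/(2R)) + (r(r² + 2R²)/(2πR))·√(1 − (r/(2R))²) ) for 0 ≤ r ≤ 2R. Then ∫₀^{2R} f(r) dr = 1 and f(r) ≥ 0 on [0, 2R]. -/
open Real

private lemma g_aux_nonneg : ∀ θ ∈ Set.Icc (0:ℝ) (π/2),
    0 ≤ Real.sin θ * Real.cos θ * (2 * Real.cos θ ^ 2 + 1) + (1 - 4 * Real.cos θ ^ 2) * θ := by
  set g : ℝ → ℝ := fun θ => Real.sin θ * Real.cos θ * (2 * Real.cos θ ^ 2 + 1) +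
      (1 - 4 * Real.cos θ ^ 2) * θ with hg
  have hderiv : ∀ x : ℝ, HasDerivAt g
      (8 * Real.sin x * Real.cos x * (x - Real.sin x * Real.cos x)) x := by
    intro x
    have h1 : HasDerivAt g
        ((Real.cos x * Real.cos x + Real.sin x * (-Real.sin x)) * (2 * Real.cos x ^ 2 + 1) +
          (Real.sin x * Real.cos x) * (2 * (2 * Real.cos x ^ 1 * (-Real.sin x)) + 0) +
          ((0 - 4 * (2 * Real.cos x ^ 1 * (-Real.sin x))) * x + (1 - 4 * Real.cos x ^ 2) * 1)) x := by
      have := (((Real.hasDerivAt_sin x).mul (Real.hasDerivAt_cos x)).mul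
        ((((Real.hasDerivAt_cos x).pow 2).const_mul 2).add_const 1)).add
        (((hasDerivAt_const x 1).sub (((Real.hasDerivAt_cos x).pow 2).const_mul 4)).mul
          (hasDerivAt_id x))
      exact this.congr_deriv (by simp)
    convert h1 using 1
    linear_combination (1 - 2 * Real.cos x ^ 2) * Real.sin_sq_add_cos_sq x
  have hmono : MonotoneOn g (Set.Icc 0 (π/2)) := by
    apply monotoneOn_of_deriv_nonneg (convex_Icc _ _)
    · exact (Continuous.continuousOn (by continuity))
    · intro x hx
      exact (hderiv x).differentiableAt.differentiableWithinAt
    · intro x hx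
      rw [interior_Icc] at hx
      rw [(hderiv x).deriv]
      have hs : 0 ≤ Real.sin x := Real.sin_nonneg_of_nonneg_of_le_pi hx.1.le
        (le_trans hx.2.le (by linarith [Real.pi_pos]))
      have hc : 0 ≤ Real.cos x := Real.cos_nonneg_of_mem_Icc
        ⟨by linarith [hx.1, Real.pi_pos], hx.2.le⟩
      have hsc : Real.sin x * Real.cos x ≤ x := by
        calc Real.sin x * Real.cos x ≤ Real.sin x * 1 :=
          mul_le_mul_of_nonneg_left (Real.cos_le_one x) hs
        _ = Real.sin x := mul_one _
        _ ≤ x := Real.sin_le hx.1.le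
      nlinarith [mul_nonneg (mul_nonneg hs hc) (sub_nonneg.2 hsc)]
  intro θ hθ
  have h0 : g 0 = 0 := by simp [hg]
  have := hmono (Set.left_mem_Icc.2 (by positivity)) hθ hθ.1
  rwa [h0] at this

private lemma pdf_deriv_aux (R r s A : ℝ) (hR : 0 < R) (hs0 : 0 < s)
    (hss : s * s = 1 - (r / (2 * R)) ^ 2) :
    (2 * r / R ^ 4) * ((2 * (R ^ 2 - r ^ 2) / π) * A +
        (r * (r ^ 2 + 2 * R ^ 2) / (2 * π * R)) * s) =
    ((2 * (2 * r ^ 1) * R ^ 2 - 4 * r ^ 3) / R ^ 4 * A +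
        ((2 * r ^ 2 * R ^ 2 - r ^ 4) / R ^ 4 - 2) * (-(1 / s) * (1 / (2 * R))) +
      ((5 * r ^ 4 + 5 * R ^ 2 * (3 * r ^ 2) - 6 * R ^ 4 * 1) / (6 * R ^ 5) * s +
        (r ^ 5 + 5 * R ^ 2 * r ^ 3 - 6 * R ^ 4 * r) / (6 * R ^ 5) *
          (1 / (2 * s) * (0 - 2 * (r / (2 * R)) ^ 1 * (1 / (2 * R)))))) / π := by
  have hss2 : s * s * (4 * R ^ 2) = 4 * R ^ 2 - r ^ 2 := by
    field_simp at hss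
    linarith [hss]
  field_simp
  linear_combination (r ^ 4 - 3 * r ^ 2 * R ^ 2 + 6 * R ^ 4) * hss2

open Real in
theorem pdf_2D_s1s2_equal_radii (R : ℝ) (hR : 0 < R) :
    (∫ r in (0:ℝ)..(2 * R),
      (2 * r / R ^ 4) * ((2 * (R ^ 2 - r ^ 2) / π) * Real.arccos (r / (2 * R)) +
        (r * (r ^ 2 + 2 * R ^ 2) / (2 * π * R)) * Real.sqrt (1 - (r / (2 * R)) ^ 2))) = 1 ∧
    (∀ r ∈ Set.Icc (0:ℝ) (2 * R),
      0 ≤ (2 * r / R ^ 4) * ((2 * (R ^ 2 - r ^ 2) / π) * Real.arccos (r / (2 * R)) +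
        (r * (r ^ 2 + 2 * R ^ 2) / (2 * π * R)) * Real.sqrt (1 - (r / (2 * R)) ^ 2))) := by
  have hπ : (0:ℝ) < π := Real.pi_pos
  constructor
  · -- integral part
    set f : ℝ → ℝ := fun r =>
      (2 * r / R ^ 4) * ((2 * (R ^ 2 - r ^ 2) / π) * Real.arccos (r / (2 * R)) +
        (r * (r ^ 2 + 2 * R ^ 2) / (2 * π * R)) * Real.sqrt (1 - (r / (2 * R)) ^ 2)) with hf
    set F : ℝ → ℝ := fun r =>
      (((2 * r ^ 2 * R ^ 2 - r ^ 4) / R ^ 4 - 2) * Real.arccos (r / (2 * R)) +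
        ((r ^ 5 + 5 * R ^ 2 * r ^ 3 - 6 * R ^ 4 * r) / (6 * R ^ 5)) *
          Real.sqrt (1 - (r / (2 * R)) ^ 2)) / π with hF
    have key : (∫ r in (0:ℝ)..(2 * R), f r) = F (2 * R) - F 0 := by
      apply intervalIntegral.integral_eq_sub_of_hasDeriv_right_of_le (by linarith)
      · apply Continuous.continuousOn
        apply Continuous.div_const
        apply Continuous.add
        · exact (by continuity : Continuous fun r : ℝ => ((2 * r ^ 2 * R ^ 2 - r ^ 4) / R ^ 4 - 2)).mul
            (Real.continuous_arccos.comp (by continuity))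
        · exact (by continuity : Continuous fun r : ℝ => ((r ^ 5 + 5 * R ^ 2 * r ^ 3 - 6 * R ^ 4 * r) / (6 * R ^ 5))).mul
            (Real.continuous_sqrt.comp (by continuity))
      · intro r hr
        apply HasDerivAt.hasDerivWithinAt
        have hx1 : r / (2 * R) < 1 := by
          rw [div_lt_one (by linarith)]; exact hr.2
        have hxm1 : (-1 : ℝ) < r / (2 * R) := by
          have : 0 < r / (2 * R) := div_pos hr.1 (by linarith)
          linarith
        have hu : (0:ℝ) < 1 - (r / (2 * R)) ^ 2 := by nlinarith
        have hs0 : 0 < Real.sqrt (1 - (r / (2 * R)) ^ 2) := Real.sqrt_pos.2 hu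
        set s := Real.sqrt (1 - (r / (2 * R)) ^ 2) with hs
        have hss : s * s = 1 - (r / (2 * R)) ^ 2 := Real.mul_self_sqrt hu.le
        -- derivative of arccos part
        have hA : HasDerivAt (fun r : ℝ => Real.arccos (r / (2 * R)))
            (-(1 / s) * (1 / (2 * R))) r := by
          have := (Real.hasDerivAt_arccos (ne_of_gt hxm1) (ne_of_lt hx1)).comp r
            ((hasDerivAt_id r).div_const (2 * R))
          exact this
        have hS : HasDerivAt (fun r : ℝ => Real.sqrt (1 - (r / (2 * R)) ^ 2))
            (1 / (2 * s) * (0 - 2 * (r / (2 * R)) ^ 1 * (1 / (2 * R)))) r := by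
          exact (Real.hasDerivAt_sqrt (ne_of_gt hu)).comp r
            ((hasDerivAt_const r 1).sub (((hasDerivAt_id r).div_const (2 * R)).pow 2))
        have hP : HasDerivAt (fun r : ℝ => (2 * r ^ 2 * R ^ 2 - r ^ 4) / R ^ 4 - 2)
            ((2 * (2 * r ^ 1) * R ^ 2 - 4 * r ^ 3) / R ^ 4) r := by
          exact ((((hasDerivAt_pow 2 r).const_mul 2).mul_const (R ^ 2)).sub
            (hasDerivAt_pow 4 r)).div_const (R ^ 4) |>.sub_const 2
        have hQ : HasDerivAt (fun r : ℝ => (r ^ 5 + 5 * R ^ 2 * r ^ 3 - 6 * R ^ 4 * r) / (6 * R ^ 5))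
            ((5 * r ^ 4 + 5 * R ^ 2 * (3 * r ^ 2) - 6 * R ^ 4 * 1) / (6 * R ^ 5)) r := by
          exact (((hasDerivAt_pow 5 r).add (((hasDerivAt_pow 3 r).const_mul (5 * R ^ 2)))).sub
            ((hasDerivAt_id r).const_mul (6 * R ^ 4))).div_const (6 * R ^ 5)
        have hFd := ((hP.mul hA).add (hQ.mul hS)).div_const π
        have hkey := pdf_deriv_aux R r s (Real.arccos (r / (2 * R))) hR hs0 hss
        simp only [hf]
        rw [hkey]
        exact hFd
      · apply Continuous.intervalIntegrable
        apply Continuous.mul (by continuity)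
        apply Continuous.add
        · exact (by continuity : Continuous fun r : ℝ => (2 * (R ^ 2 - r ^ 2) / π)).mul
            (Real.continuous_arccos.comp (by continuity))
        · exact (by continuity : Continuous fun r : ℝ => (r * (r ^ 2 + 2 * R ^ 2) / (2 * π * R))).mul
            (Real.continuous_sqrt.comp (by continuity))
    rw [key, hF]
    have h2R : (2 * R) / (2 * R) = 1 := div_self (by positivity)
    have h0 : (0:ℝ) / (2 * R) = 0 := zero_div _
    simp only [h2R, h0, Real.arccos_one, Real.arccos_zero]
    rw [show (1:ℝ) - 1 ^ 2 = 0 by ring, Real.sqrt_zero]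
    field_simp
    simp; ring
  · -- nonnegativity
    intro r hr
    have hx0 : 0 ≤ r / (2 * R) := div_nonneg hr.1 (by linarith)
    have hx1 : r / (2 * R) ≤ 1 := by
      rw [div_le_one (by linarith)]; exact hr.2
    set θ := Real.arccos (r / (2 * R)) with hθ
    have hcos : Real.cos θ = r / (2 * R) := Real.cos_arccos (by linarith) hx1
    have hsin : Real.sqrt (1 - (r / (2 * R)) ^ 2) = Real.sin θ := (Real.sin_arccos _).symm
    have hθmem : θ ∈ Set.Icc (0:ℝ) (π/2) :=
      ⟨Real.arccos_nonneg _, Real.arccos_le_pi_div_two.2 hx0⟩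
    have hg := g_aux_nonneg θ hθmem
    have hrθ : r = 2 * R * Real.cos θ := by
      rw [hcos]; field_simp
    rw [hsin]
    have heq : (2 * (R ^ 2 - r ^ 2) / π) * θ +
        (r * (r ^ 2 + 2 * R ^ 2) / (2 * π * R)) * Real.sin θ =
        (2 * R ^ 2 / π) * (Real.sin θ * Real.cos θ * (2 * Real.cos θ ^ 2 + 1) +
          (1 - 4 * Real.cos θ ^ 2) * θ) := by
      rw [hrθ]; field_simp; ring
    rw [heq]
    apply mul_nonneg
    · exact div_nonneg (by linarith [hr.1]) (by positivity)
    · apply mul_nonneg (by positivity) hg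
end

section
/- Let R > 0 and define f(r) = (2r/R⁴)·( (4(2R² − 3r²)/(3π))·arccos(r/(2R)) + ((−r⁵ + 16r³R² + 12rR⁴)/(9πR³))·√(1 − (r/(2R))²) ) for 0 ≤ r ≤ 2R. Then ∫₀^{2R} f(r) dr = 1. -/
open Real

lemma pdf_2D_s3_key_identity (R x a s : ℝ) (hR : R ≠ 0) (hs : s ≠ 0)
    (hs2 : s ^ 2 = 1 - (x / (2 * R)) ^ 2) :
    (2 * x / R ^ 4) * ((4 * (2 * R ^ 2 - 3 * x ^ 2) / (3 * π)) * a +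
      ((-x ^ 5 + 16 * x ^ 3 * R ^ 2 + 12 * x * R ^ 4) / (9 * π * R ^ 3)) * s)
    = (((8 * (2 * x) * R ^ 2 - 6 * (4 * x ^ 3)) / (3 * π * R ^ 4)) * a
      + ((8 * x ^ 2 * R ^ 2 - 6 * x ^ 4 - 6 * R ^ 4) / (3 * π * R ^ 4)) *
          (-(1 / s) * (1 / (2 * R))))
      + (((-(7 * x ^ 6) + 22 * (5 * x ^ 4) * R ^ 2 + 42 * (3 * x ^ 2) * R ^ 4 - 36 * R ^ 6)
            / (36 * π * R ^ 7)) * s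
      + ((-x ^ 7 + 22 * x ^ 5 * R ^ 2 + 42 * x ^ 3 * R ^ 4 - 36 * x * R ^ 6) / (36 * π * R ^ 7)) *
          (1 / (2 * s) * (-(2 * (x / (2 * R)) * (1 / (2 * R)))))) := by
  have hs2' : s ^ 2 * (4 * R ^ 2) = 4 * R ^ 2 - x ^ 2 := by
    rw [hs2]; field_simp; ring
  have h4 : 4 * R ^ 2 - x ^ 2 ≠ 0 := by
    rw [← hs2']; positivity
  have h1s : 1 / s = s * (4 * R ^ 2) / (4 * R ^ 2 - x ^ 2) := by
    rw [← hs2', sq]; field_simp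
  have h2s : 1 / (2 * s) = s * (2 * R ^ 2) / (4 * R ^ 2 - x ^ 2) := by
    rw [← hs2', sq]; field_simp; ring
  rw [h1s, h2s]
  have hpi := Real.pi_ne_zero
  have h4' : R ^ 2 * 4 - x ^ 2 ≠ 0 := by contrapose! h4; linarith
  field_simp
  ring

set_option maxHeartbeats 1000000 in
open Real in
theorem pdf_2D_s3_equal_radii (R : ℝ) (hR : 0 < R) :
    (∫ r in (0:ℝ)..(2 * R),
      (2 * r / R ^ 4) * ((4 * (2 * R ^ 2 - 3 * r ^ 2) / (3 * π)) * Real.arccos (r / (2 * R)) +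
        ((-r ^ 5 + 16 * r ^ 3 * R ^ 2 + 12 * r * R ^ 4) / (9 * π * R ^ 3)) *
          Real.sqrt (1 - (r / (2 * R)) ^ 2))) = 1 := by
  have hRne : R ≠ 0 := hR.ne'
  have hpi := Real.pi_ne_zero
  set F : ℝ → ℝ := fun y =>
    (8 * y ^ 2 * R ^ 2 - 6 * y ^ 4 - 6 * R ^ 4) / (3 * π * R ^ 4) * Real.arccos (y / (2 * R))
    + (-y ^ 7 + 22 * y ^ 5 * R ^ 2 + 42 * y ^ 3 * R ^ 4 - 36 * y * R ^ 6) / (36 * π * R ^ 7) *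
        Real.sqrt (1 - (y / (2 * R)) ^ 2) with hFdef
  have hab : (0:ℝ) ≤ 2 * R := by positivity
  -- continuity of F
  have hcontF : Continuous F := by
    apply Continuous.add
    · exact (Continuous.div_const (by continuity) _).mul
        (Real.continuous_arccos.comp (continuous_id.div_const _))
    · exact (Continuous.div_const (by continuity) _).mul
        (Real.continuous_sqrt.comp (by continuity))
  -- continuity of the integrand
  have hcontf : Continuous (fun r : ℝ =>
      (2 * r / R ^ 4) * ((4 * (2 * R ^ 2 - 3 * r ^ 2) / (3 * π)) * Real.arccos (r / (2 * R)) +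
        ((-r ^ 5 + 16 * r ^ 3 * R ^ 2 + 12 * r * R ^ 4) / (9 * π * R ^ 3)) *
          Real.sqrt (1 - (r / (2 * R)) ^ 2))) := by
    apply (Continuous.div_const (by continuity) _).mul
    apply Continuous.add
    · exact (Continuous.div_const (by continuity) _).mul
        (Real.continuous_arccos.comp (continuous_id.div_const _))
    · exact (Continuous.div_const (by continuity) _).mul
        (Real.continuous_sqrt.comp (by continuity))
  -- derivative on the open interval
  have hderiv : ∀ x ∈ Set.Ioo (0:ℝ) (2 * R), HasDerivWithinAt F
      ((2 * x / R ^ 4) * ((4 * (2 * R ^ 2 - 3 * x ^ 2) / (3 * π)) * Real.arccos (x / (2 * R)) +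
        ((-x ^ 5 + 16 * x ^ 3 * R ^ 2 + 12 * x * R ^ 4) / (9 * π * R ^ 3)) *
          Real.sqrt (1 - (x / (2 * R)) ^ 2))) (Set.Ioi x) x := by
    intro x hx
    obtain ⟨hx0, hx2⟩ := hx
    have hu0 : 0 < x / (2 * R) := by positivity
    have hu1 : x / (2 * R) < 1 := by
      rw [div_lt_one (by positivity)]; exact hx2
    have hune1 : x / (2 * R) ≠ 1 := ne_of_lt hu1
    have hunem1 : x / (2 * R) ≠ -1 := by linarith
    have hpos : 0 < 1 - (x / (2 * R)) ^ 2 := by nlinarith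
    have hsne : Real.sqrt (1 - (x / (2 * R)) ^ 2) ≠ 0 :=
      ne_of_gt (Real.sqrt_pos.mpr hpos)
    have hs2 : (Real.sqrt (1 - (x / (2 * R)) ^ 2)) ^ 2 = 1 - (x / (2 * R)) ^ 2 :=
      Real.sq_sqrt hpos.le
    -- building blocks
    have hu : HasDerivAt (fun y : ℝ => y / (2 * R)) (1 / (2 * R)) x := by
      simpa using (hasDerivAt_id x).div_const (2 * R)
    have harccos : HasDerivAt (fun y : ℝ => Real.arccos (y / (2 * R)))
        (-(1 / Real.sqrt (1 - (x / (2 * R)) ^ 2)) * (1 / (2 * R))) x :=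
      HasDerivAt.comp (h₂ := Real.arccos) x (Real.hasDerivAt_arccos hunem1 hune1) hu
    have hinner : HasDerivAt (fun y : ℝ => 1 - (y / (2 * R)) ^ 2)
        (-(2 * (x / (2 * R)) * (1 / (2 * R)))) x := by
      have := (hu.pow 2).const_sub 1
      simpa using this
    have hsqrt : HasDerivAt (fun y : ℝ => Real.sqrt (1 - (y / (2 * R)) ^ 2))
        (1 / (2 * Real.sqrt (1 - (x / (2 * R)) ^ 2)) * (-(2 * (x / (2 * R)) * (1 / (2 * R))))) x :=
      (Real.hasDerivAt_sqrt (ne_of_gt hpos)).comp x hinner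
    have hP : HasDerivAt (fun y : ℝ => (8 * y ^ 2 * R ^ 2 - 6 * y ^ 4 - 6 * R ^ 4) / (3 * π * R ^ 4))
        ((8 * (2 * x) * R ^ 2 - 6 * (4 * x ^ 3)) / (3 * π * R ^ 4)) x := by
      have h2 : HasDerivAt (fun y : ℝ => 8 * y ^ 2 * R ^ 2) (8 * (2 * x) * R ^ 2) x := by
        simpa using (((hasDerivAt_pow 2 x).const_mul 8).mul_const (R ^ 2))
      have h4 : HasDerivAt (fun y : ℝ => 6 * y ^ 4) (6 * (4 * x ^ 3)) x := by
        simpa using ((hasDerivAt_pow 4 x).const_mul 6)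
      exact ((h2.sub h4).sub_const (6 * R ^ 4)).div_const _
    have hQ : HasDerivAt (fun y : ℝ =>
        (-y ^ 7 + 22 * y ^ 5 * R ^ 2 + 42 * y ^ 3 * R ^ 4 - 36 * y * R ^ 6) / (36 * π * R ^ 7))
        ((-(7 * x ^ 6) + 22 * (5 * x ^ 4) * R ^ 2 + 42 * (3 * x ^ 2) * R ^ 4 - 36 * R ^ 6)
          / (36 * π * R ^ 7)) x := by
      have h7 : HasDerivAt (fun y : ℝ => -y ^ 7) (-(7 * x ^ 6)) x := by
        simpa using (hasDerivAt_pow 7 x).fun_neg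
      have h5 : HasDerivAt (fun y : ℝ => 22 * y ^ 5 * R ^ 2) (22 * (5 * x ^ 4) * R ^ 2) x := by
        simpa using (((hasDerivAt_pow 5 x).const_mul 22).mul_const (R ^ 2))
      have h3 : HasDerivAt (fun y : ℝ => 42 * y ^ 3 * R ^ 4) (42 * (3 * x ^ 2) * R ^ 4) x := by
        simpa using (((hasDerivAt_pow 3 x).const_mul 42).mul_const (R ^ 4))
      have h1 : HasDerivAt (fun y : ℝ => 36 * y * R ^ 6) (36 * R ^ 6) x := by
        simpa using ((hasDerivAt_id x).const_mul 36).mul_const (R ^ 6)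
      exact (((h7.add h5).add h3).sub h1).div_const _
    have hD : HasDerivAt F
        ((((8 * (2 * x) * R ^ 2 - 6 * (4 * x ^ 3)) / (3 * π * R ^ 4)) * Real.arccos (x / (2 * R))
          + ((8 * x ^ 2 * R ^ 2 - 6 * x ^ 4 - 6 * R ^ 4) / (3 * π * R ^ 4)) *
              (-(1 / Real.sqrt (1 - (x / (2 * R)) ^ 2)) * (1 / (2 * R))))
          + (((-(7 * x ^ 6) + 22 * (5 * x ^ 4) * R ^ 2 + 42 * (3 * x ^ 2) * R ^ 4 - 36 * R ^ 6)
                / (36 * π * R ^ 7)) * Real.sqrt (1 - (x / (2 * R)) ^ 2)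
          + ((-x ^ 7 + 22 * x ^ 5 * R ^ 2 + 42 * x ^ 3 * R ^ 4 - 36 * x * R ^ 6)
                / (36 * π * R ^ 7)) *
              (1 / (2 * Real.sqrt (1 - (x / (2 * R)) ^ 2)) *
                (-(2 * (x / (2 * R)) * (1 / (2 * R))))))) x :=
      (hP.mul harccos).add (hQ.mul hsqrt)
    rw [pdf_2D_s3_key_identity R x (Real.arccos (x / (2 * R)))
      (Real.sqrt (1 - (x / (2 * R)) ^ 2)) hRne hsne hs2]
    exact hD.hasDerivWithinAt
  have hint : IntervalIntegrable (fun r : ℝ =>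
      (2 * r / R ^ 4) * ((4 * (2 * R ^ 2 - 3 * r ^ 2) / (3 * π)) * Real.arccos (r / (2 * R)) +
        ((-r ^ 5 + 16 * r ^ 3 * R ^ 2 + 12 * r * R ^ 4) / (9 * π * R ^ 3)) *
          Real.sqrt (1 - (r / (2 * R)) ^ 2))) MeasureTheory.volume 0 (2 * R) :=
    hcontf.intervalIntegrable _ _
  rw [intervalIntegral.integral_eq_sub_of_hasDeriv_right_of_le hab hcontF.continuousOn
    hderiv hint]
  -- evaluate endpoints
  have hF2R : F (2 * R) = 0 := by
    rw [hFdef]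
    simp only
    rw [show (2 * R) / (2 * R) = 1 by field_simp]
    simp [Real.arccos_one]
  have hF0 : F 0 = -1 := by
    rw [hFdef]
    simp only
    norm_num [Real.arccos_zero]
    field_simp
    ring
  rw [hF2R, hF0]
  norm_num
end
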